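/- Let u, v ∈ ℍ² be points of the hyperbolic plane with r := d(u, v) ≤ R for some R ≥ 0, and let S be a finite set of points of ℍ² such that every w ∈ S satisfies d(w, u) ≤ r and d(w, v) ≤ r. Then S can be partitioned into two sets S_1 and S_2 such that any two points lying in the same part are at hyperbolic distance at most R. In other words, in a hyperbolic unit disk graph with threshold R, the subgraph induced by the vertices lying in the lens B_u(r) ∩ B_v(r) is co-bipartite. -/

import Mathlib

open UpperHalfPlane MatrixGroups


private lemma key_ineq (a b K x₁ x₂ y₁ y₂ : ℝ) (ha : 0 < a) (hb : 0 < b) (hab : a ≤ b)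
    (hx₂ : 0 < x₂) (hy₂ : 0 < y₂)
    (hK : 2 * a * b * K = a ^ 2 + b ^ 2)
    (hxu : x₁ ^ 2 + x₂ ^ 2 + a ^ 2 ≤ 2 * a * K * x₂)
    (hxv : x₁ ^ 2 + x₂ ^ 2 + b ^ 2 ≤ 2 * b * K * x₂)
    (hyu : y₁ ^ 2 + y₂ ^ 2 + a ^ 2 ≤ 2 * a * K * y₂)
    (hyv : y₁ ^ 2 + y₂ ^ 2 + b ^ 2 ≤ 2 * b * K * y₂)
    (hyx : y₁ ^ 2 ≤ x₁ ^ 2) (hsign : 0 ≤ x₁ * y₁) :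
    (x₁ - y₁) ^ 2 + x₂ ^ 2 + y₂ ^ 2 ≤ 2 * K * x₂ * y₂ := by
  -- y₂ ∈ [a, b]
  have hKy : 2 * a * b * K * y₂ = (a ^ 2 + b ^ 2) * y₂ := by rw [hK]
  have h1 : y₂ ≤ b := by
    by_contra h
    push_neg at h
    have hp : (0:ℝ) < b * y₂ - a ^ 2 := by nlinarith
    have := mul_pos hp (sub_pos.2 h)
    nlinarith [sq_nonneg y₁, mul_le_mul_of_nonneg_left hyu hb.le]
  have h2 : a ≤ y₂ := by
    by_contra h
    push_neg at h
    have hp : (0:ℝ) < b ^ 2 - a * y₂ := by nlinarith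
    nlinarith [sq_nonneg y₁, mul_le_mul_of_nonneg_left hyv ha.le, mul_pos hp (sub_pos.2 h)]
  have hx : (x₁ - y₁) ^ 2 ≤ x₁ ^ 2 := by
    nlinarith [sq_nonneg (x₁ - y₁), sq_nonneg (x₁ + y₁)]
  have G : x₁ ^ 2 + x₂ ^ 2 + y₂ ^ 2 ≤ 2 * K * x₂ * y₂ := by
    rcases eq_or_lt_of_le hab with heq | hlt
    · subst heq
      have : y₂ = a := le_antisymm h1 h2
      subst this
      nlinarith
    · nlinarith [mul_nonneg (sub_nonneg.2 h2) (sub_nonneg.2 h1),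
        mul_nonneg (mul_nonneg (sub_nonneg.2 h2) (sub_nonneg.2 h1)) (le_of_lt (sub_pos.2 hlt)),
        mul_nonneg (sub_nonneg.2 h1) (sub_nonneg.2 hxu),
        mul_nonneg (sub_nonneg.2 h2) (sub_nonneg.2 hxv)]
  linarith

private lemma cosh_mono {s t : ℝ} (hs : 0 ≤ s) (ht : 0 ≤ t)
    (h : Real.cosh s ≤ Real.cosh t) : s ≤ t := by
  have := Real.cosh_le_cosh.mp h
  rwa [abs_of_nonneg hs, abs_of_nonneg ht] at this

private lemma half_lens (u v x y : ℍ) (hu : u.re = 0) (hv : v.re = 0)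
    (him : u.im ≤ v.im)
    (hxu : dist x u ≤ dist u v) (hxv : dist x v ≤ dist u v)
    (hyu : dist y u ≤ dist u v) (hyv : dist y v ≤ dist u v)
    (hsign : 0 ≤ x.re * y.re) : dist x y ≤ dist u v := by
  set K := Real.cosh (dist u v) with hKdef
  have ha := u.im_pos
  have hb := v.im_pos
  have hxim := x.im_pos
  have hyim := y.im_pos
  have hK : 2 * u.im * v.im * K = u.im ^ 2 + v.im ^ 2 := by
    rw [hKdef, cosh_dist', hu, hv]
    field_simp
    ring
  have cvt : ∀ z w : ℍ, dist z w ≤ dist u v →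
      (z.re - w.re) ^ 2 + z.im ^ 2 + w.im ^ 2 ≤ 2 * z.im * w.im * K := by
    intro z w h
    have h' : Real.cosh (dist z w) ≤ K := Real.cosh_le_cosh.mpr
      (by rw [abs_of_nonneg dist_nonneg, abs_of_nonneg dist_nonneg]; exact h)
    rw [cosh_dist'] at h'
    have hpos : (0:ℝ) < 2 * z.im * w.im := by positivity
    calc (z.re - w.re) ^ 2 + z.im ^ 2 + w.im ^ 2
        = ((z.re - w.re) ^ 2 + z.im ^ 2 + w.im ^ 2) / (2 * z.im * w.im) * (2 * z.im * w.im) := by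
          field_simp
      _ ≤ K * (2 * z.im * w.im) := mul_le_mul_of_nonneg_right h' hpos.le
      _ = 2 * z.im * w.im * K := by ring
  have Hxu := cvt x u hxu
  have Hxv := cvt x v hxv
  have Hyu := cvt y u hyu
  have Hyv := cvt y v hyv
  rw [hu] at Hxu Hyu
  rw [hv] at Hxv Hyv
  simp only [sub_zero] at Hxu Hxv Hyu Hyv
  -- apply key inequality
  have goal' : (x.re - y.re) ^ 2 + x.im ^ 2 + y.im ^ 2 ≤ 2 * K * x.im * y.im := by
    rcases le_total (y.re ^ 2) (x.re ^ 2) with hc | hc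
    · have := key_ineq u.im v.im K x.re x.im y.re y.im ha hb him hxim hyim hK
        (by linarith) (by linarith) (by linarith) (by linarith) hc hsign
      ring_nf at this ⊢
      linarith
    · have := key_ineq u.im v.im K y.re y.im x.re x.im ha hb him hyim hxim hK
        (by linarith) (by linarith) (by linarith) (by linarith) hc
        (by linarith [hsign, mul_comm x.re y.re])
      ring_nf at this ⊢
      linarith
  apply cosh_mono dist_nonneg dist_nonneg
  rw [cosh_dist' x y, ← hKdef]
  rw [div_le_iff₀ (by positivity)]
  ring_nf at goal' ⊢
  linarith



private lemma smul_re_zero (g : SL(2, ℝ)) (z : ℍ)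
    (hz : (g 0 0 : ℝ) * g 1 0 * (z.re ^ 2 + z.im ^ 2) +
      ((g 0 0 : ℝ) * g 1 1 + (g 0 1 : ℝ) * g 1 0) * z.re + (g 0 1 : ℝ) * g 1 1 = 0) :
    (g • z).re = 0 := by
  rw [UpperHalfPlane.specialLinearGroup_apply]
  simp only [UpperHalfPlane.coe_mk, RingHom.id_apply, Algebra.algebraMap_self]
  rw [UpperHalfPlane.re, UpperHalfPlane.coe_mk, Complex.div_re]
  have h1 : ((g 0 0 : ℝ) * (z:ℂ) + (g 0 1 : ℝ)).re = g 0 0 * z.re + g 0 1 := by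
    simp [Complex.add_re, Complex.mul_re]
  have h2 : ((g 0 0 : ℝ) * (z:ℂ) + (g 0 1 : ℝ)).im = g 0 0 * z.im := by
    simp [Complex.add_im, Complex.mul_im]
  have h3 : ((g 1 0 : ℝ) * (z:ℂ) + (g 1 1 : ℝ)).re = g 1 0 * z.re + g 1 1 := by
    simp [Complex.add_re, Complex.mul_re]
  have h4 : ((g 1 0 : ℝ) * (z:ℂ) + (g 1 1 : ℝ)).im = g 1 0 * z.im := by
    simp [Complex.add_im, Complex.mul_im]
  rw [h1, h2, h3, h4, ← add_div]
  have : (g 0 0 * z.re + g 0 1) * (g 1 0 * z.re + g 1 1) + g 0 0 * z.im * (g 1 0 * z.im) =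
      (g 0 0 : ℝ) * g 1 0 * (z.re ^ 2 + z.im ^ 2) +
      ((g 0 0 : ℝ) * g 1 1 + (g 0 1 : ℝ) * g 1 0) * z.re + (g 0 1 : ℝ) * g 1 1 := by ring
  rw [this, hz, zero_div]

private lemma exists_normalize (u v : ℍ) :
    ∃ g : SL(2, ℝ), (g • u).re = 0 ∧ (g • v).re = 0 := by
  by_cases hre : u.re = v.re
  · refine ⟨⟨!![1, -u.re; 0, 1], by rw [Matrix.det_fin_two_of]; ring⟩, ?_, ?_⟩
    · apply smul_re_zero
      simp only [Matrix.of_apply, Matrix.cons_val', Matrix.cons_val_zero, Matrix.cons_val_one,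
        Matrix.head_cons, Matrix.empty_val', Matrix.cons_val_fin_one, Matrix.head_fin_const]
      ring
    · apply smul_re_zero
      simp only [Matrix.of_apply, Matrix.cons_val', Matrix.cons_val_zero, Matrix.cons_val_one,
        Matrix.head_cons, Matrix.empty_val', Matrix.cons_val_fin_one, Matrix.head_fin_const]
      linear_combination -hre
  · set c₀ : ℝ := (v.re ^ 2 + v.im ^ 2 - u.re ^ 2 - u.im ^ 2) / (2 * (v.re - u.re)) with hc₀
    set ρ : ℝ := Real.sqrt ((u.re - c₀) ^ 2 + u.im ^ 2) with hρ
    have him := u.im_pos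
    have hρpos : 0 < ρ := Real.sqrt_pos.mpr (by positivity)
    have hρsq : ρ ^ 2 = (u.re - c₀) ^ 2 + u.im ^ 2 := Real.sq_sqrt (by positivity)
    have hvsq : ρ ^ 2 = (v.re - c₀) ^ 2 + v.im ^ 2 := by
      rw [hρsq, hc₀]
      have hne : v.re - u.re ≠ 0 := sub_ne_zero.mpr (Ne.symm hre)
      field_simp
      ring
    set s : ℝ := (Real.sqrt (2 * ρ))⁻¹ with hs
    have hspos : 0 < s := by positivity
    have hssq : s ^ 2 * (2 * ρ) = 1 := by
      rw [hs, inv_pow, Real.sq_sqrt (by positivity)]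
      field_simp
    refine ⟨⟨!![s, -(s * (c₀ - ρ)); -s, s * (c₀ + ρ)], by
        rw [Matrix.det_fin_two_of]; nlinarith [hssq]⟩, ?_, ?_⟩
    · apply smul_re_zero
      simp only [Matrix.of_apply, Matrix.cons_val', Matrix.cons_val_zero, Matrix.cons_val_one,
        Matrix.head_cons, Matrix.empty_val', Matrix.cons_val_fin_one, Matrix.head_fin_const]
      have : s * -s * (u.re ^ 2 + u.im ^ 2) +
          (s * (s * (c₀ + ρ)) + -(s * (c₀ - ρ)) * -s) * u.re + -(s * (c₀ - ρ)) * (s * (c₀ + ρ)) =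
          s ^ 2 * (ρ ^ 2 - ((u.re - c₀) ^ 2 + u.im ^ 2)) := by ring
      rw [this, ← hρsq, sub_self, mul_zero]
    · apply smul_re_zero
      simp only [Matrix.of_apply, Matrix.cons_val', Matrix.cons_val_zero, Matrix.cons_val_one,
        Matrix.head_cons, Matrix.empty_val', Matrix.cons_val_fin_one, Matrix.head_fin_const]
      have : s * -s * (v.re ^ 2 + v.im ^ 2) +
          (s * (s * (c₀ + ρ)) + -(s * (c₀ - ρ)) * -s) * v.re + -(s * (c₀ - ρ)) * (s * (c₀ + ρ)) =
          s ^ 2 * (ρ ^ 2 - ((v.re - c₀) ^ 2 + v.im ^ 2)) := by ring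
      rw [this, ← hvsq, sub_self, mul_zero]


/-- The hyperbolic lens `B_u(r) ∩ B_v(r)` with `r = d(u,v) ≤ R` is co-bipartite with
threshold `R`: any finite set of points of the lens can be partitioned into two parts
such that two points in the same part are at hyperbolic distance at most `R`. -/
theorem lens_co_bipartite (R : ℝ) (hR : 0 ≤ R) (u v : UpperHalfPlane)
    (huv : dist u v ≤ R)
    (S : Set UpperHalfPlane) (hfin : S.Finite)
    (hS : ∀ w ∈ S, dist w u ≤ dist u v ∧ dist w v ≤ dist u v) :
    ∃ S₁ S₂ : Set UpperHalfPlane, S = S₁ ∪ S₂ ∧ Disjoint S₁ S₂ ∧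
      (∀ x ∈ S₁, ∀ y ∈ S₁, dist x y ≤ R) ∧
      (∀ x ∈ S₂, ∀ y ∈ S₂, dist x y ≤ R) := by
  obtain ⟨g, hgu, hgv⟩ := exists_normalize u v
  have duv : dist (g • u) (g • v) = dist u v := dist_smul g u v
  have main : ∀ x ∈ S, ∀ y ∈ S, 0 ≤ (g • x).re * (g • y).re → dist x y ≤ R := by
    intro x hx y hy hsgn
    obtain ⟨hxu, hxv⟩ := hS x hx
    obtain ⟨hyu, hyv⟩ := hS y hy
    have key : dist (g • x) (g • y) ≤ dist (g • u) (g • v) := by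
      rcases le_total (g • u).im (g • v).im with him | him
      · exact half_lens (g • u) (g • v) (g • x) (g • y) hgu hgv him
          (by rw [dist_smul, dist_smul]; exact hxu)
          (by rw [dist_smul, dist_smul]; exact hxv)
          (by rw [dist_smul, dist_smul]; exact hyu)
          (by rw [dist_smul, dist_smul]; exact hyv) hsgn
      · have h2 := half_lens (g • v) (g • u) (g • x) (g • y) hgv hgu him
          (by rw [dist_smul, dist_smul, dist_comm v u]; exact hxv)
          (by rw [dist_smul, dist_smul, dist_comm v u]; exact hxu)
          (by rw [dist_smul, dist_smul, dist_comm v u]; exact hyv)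
          (by rw [dist_smul, dist_smul, dist_comm v u]; exact hyu) hsgn
        rwa [dist_comm (g • v) (g • u)] at h2
    calc dist x y = dist (g • x) (g • y) := (dist_smul g x y).symm
      _ ≤ dist (g • u) (g • v) := key
      _ = dist u v := duv
      _ ≤ R := huv
  refine ⟨{w | w ∈ S ∧ 0 ≤ (g • w).re}, {w | w ∈ S ∧ (g • w).re < 0}, ?_, ?_, ?_, ?_⟩
  · ext w
    constructor
    · intro hw
      rcases le_or_gt 0 (g • w).re with h | h
      · exact Or.inl ⟨hw, h⟩
      · exact Or.inr ⟨hw, h⟩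
    · rintro (⟨h, -⟩ | ⟨h, -⟩) <;> exact h
  · rw [Set.disjoint_left]
    rintro w ⟨-, h1⟩ ⟨-, h2⟩
    exact absurd h1 (not_le.2 h2)
  · rintro x ⟨hx, hx'⟩ y ⟨hy, hy'⟩
    exact main x hx y hy (mul_nonneg hx' hy')
  · rintro x ⟨hx, hx'⟩ y ⟨hy, hy'⟩
    exact main x hx y hy (le_of_lt (mul_pos_of_neg_of_neg hx' hy'))
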